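/- arXiv:2304.08020 — 4 statements merged into one kernel-verified Lean document; each statement's English description precedes it below -/
import Mathlib

section
/- Under the one-way random effect model, the ANOVA-type estimator Σ̃_b = n_0^{-1} { Σ_{i=1}^m n_i (m-1)^{-1} (Ȳ_{i·} - Ȳ_{··})(Ȳ_{i·} - Ȳ_{··})^T - Σ̂_ε }, with n_0 = (N - N^{-1} Σ_i n_i²)/(m-1) and Ȳ_{··} = N^{-1} Σ_{i,j} Y_{ij}, is an unbiased estimator of Σ_b: E[Σ̃_b] = Σ_b. -/
open MeasureTheory ProbabilityTheory Finset

lemma aux_mul_int {Ω : Type*} [MeasurableSpace Ω] {μ : Measure Ω} {f g : Ω → ℝ}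
    (hf : MemLp f 2 μ) (hg : MemLp g 2 μ) :
    Integrable (fun ω => f ω * g ω) μ := by
  have h := hg.smul (r := 1) hf
  rw [← memLp_one_iff_integrable]
  exact h

lemma aux_key {Ω : Type*} [MeasurableSpace Ω] {μ : Measure Ω} {ι : Type*} [Fintype ι]
    (U V : ι → Ω → ℝ) (v : ι → ℝ)
    (hint : ∀ a a', Integrable (fun ω => U a ω * V a' ω) μ)
    (hdiag : ∀ a, ∫ ω, U a ω * V a ω ∂μ = v a)
    (hoff : ∀ a a', a ≠ a' → ∫ ω, U a ω * V a' ω ∂μ = 0)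
    (c d : ι → ℝ) :
    ∫ ω, (∑ a, c a * U a ω) * (∑ a, d a * V a ω) ∂μ = ∑ a, c a * d a * v a := by
  have h1 : ∀ ω, (∑ a, c a * U a ω) * (∑ a, d a * V a ω)
      = ∑ a, ∑ a', (c a * d a') * (U a ω * V a' ω) := by
    intro ω
    rw [Finset.sum_mul_sum]
    exact Finset.sum_congr rfl fun a _ => Finset.sum_congr rfl fun a' _ => by ring
  simp only [h1]
  rw [integral_finset_sum _ (fun a _ =>
    integrable_finset_sum _ fun a' _ => (hint a a').const_mul _)]
  refine Finset.sum_congr rfl fun a _ => ?_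
  rw [integral_finset_sum _ (fun a' _ => (hint a a').const_mul _)]
  rw [Finset.sum_eq_single a]
  · rw [integral_const_mul, hdiag]
  · intro a' _ hne
    rw [integral_const_mul, hoff a a' (fun h => hne h.symm), mul_zero]
  · simp

lemma sum_elim_expand {m : ℕ} {n : Fin m → ℕ} (f : (Fin m ⊕ ((i : Fin m) × Fin (n i))) → ℝ) :
    ∑ a, f a = ∑ i, f (Sum.inl i) + ∑ i, ∑ j, f (Sum.inr ⟨i, j⟩) := by
  rw [Fintype.sum_sum_type, ← Finset.univ_sigma_univ, Finset.sum_sigma]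

/-- The ANOVA-type estimator of Σ_b is unbiased. -/
theorem anova_between_subject_estimator_unbiased
    {Ω : Type*} [MeasurableSpace Ω] (μ : Measure Ω) [IsProbabilityMeasure μ]
    (p m : ℕ) (hm : 2 ≤ m) (n : Fin m → ℕ) (hn : ∀ i, 1 ≤ n i)
    (Sb Se : Matrix (Fin p) (Fin p) ℝ)
    (b : Fin m → Ω → Fin p → ℝ)
    (ε : (i : Fin m) → Fin (n i) → Ω → Fin p → ℝ)
    -- i.i.d. assumptions
    (hb_id : ∀ i i', IdentDistrib (b i) (b i') μ μ)
    (he_id : ∀ i (j : Fin (n i)) i' (j' : Fin (n i')), IdentDistrib (ε i j) (ε i' j') μ μ)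
    -- mean zero and covariances
    (hb_mean : ∀ i k, ∫ ω, b i ω k ∂μ = 0)
    (hb_cov : ∀ i k l, ∫ ω, b i ω k * b i ω l ∂μ = Sb k l)
    (he_mean : ∀ i j k, ∫ ω, ε i j ω k ∂μ = 0)
    (he_cov : ∀ i j k l, ∫ ω, ε i j ω k * ε i j ω l ∂μ = Se k l)
    -- square integrability of the coordinates
    (hb_L2 : ∀ i k, MemLp (fun ω => b i ω k) 2 μ)
    (he_L2 : ∀ i j k, MemLp (fun ω => ε i j ω k) 2 μ)
    -- mutual independence of all the b's and ε's
    (hindep : iIndepFun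
      (β := fun _ : Fin m ⊕ ((i : Fin m) × Fin (n i)) => Fin p → ℝ)
      (Sum.elim b (fun x => ε x.1 x.2)) μ)
    -- the model and the subject/grand means
    (Y : (i : Fin m) → Fin (n i) → Ω → Fin p → ℝ)
    (hY : ∀ i j ω k, Y i j ω k = b i ω k + ε i j ω k)
    (Ybar : Fin m → Ω → Fin p → ℝ)
    (hYbar : ∀ i ω k, Ybar i ω k = (n i : ℝ)⁻¹ * ∑ j, Y i j ω k)
    (hNm : m < ∑ i, n i)
    (Ygrand : Ω → Fin p → ℝ)
    (hYgrand : ∀ ω k, Ygrand ω k = (∑ i, (n i : ℝ))⁻¹ * ∑ i, ∑ j, Y i j ω k)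
    (Sehat : Ω → Matrix (Fin p) (Fin p) ℝ)
    (hSehat : ∀ ω k l, Sehat ω k l =
      ((∑ i, (n i : ℝ)) - (m : ℝ))⁻¹ *
        ∑ i, ∑ j, (Y i j ω k - Ybar i ω k) * (Y i j ω l - Ybar i ω l))
    (n0 : ℝ)
    (hn0 : n0 = ((∑ i, (n i : ℝ)) - (∑ i, (n i : ℝ))⁻¹ * ∑ i, (n i : ℝ) ^ 2) / ((m : ℝ) - 1))
    (hn0ne : n0 ≠ 0) :
    ∀ k l,
      ∫ ω, n0⁻¹ *
          ((∑ i, (n i : ℝ) / ((m : ℝ) - 1) *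
              ((Ybar i ω k - Ygrand ω k) * (Ybar i ω l - Ygrand ω l)))
            - Sehat ω k l) ∂μ
        = Sb k l := by
  
  intro k l
  classical
  -- numeric facts
  have hm1 : ((m:ℝ) - 1) ≠ 0 := by
    have h2 : (2:ℝ) ≤ (m:ℝ) := by exact_mod_cast hm
    have : (0:ℝ) < (m:ℝ) - 1 := by linarith
    exact this.ne'
  have hnine : ∀ i, (n i : ℝ) ≠ 0 := fun i => by
    have := hn i; positivity
  have hmN : (m:ℝ) < ∑ i, (n i:ℝ) := by exact_mod_cast hNm
  have hNpos : (0:ℝ) < ∑ i, (n i:ℝ) := lt_of_le_of_lt (by positivity) hmN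
  have hNne : (∑ i, (n i:ℝ)) ≠ 0 := hNpos.ne'
  have hNmne : ((∑ i, (n i:ℝ)) - (m:ℝ)) ≠ 0 := sub_ne_zero.mpr hmN.ne'
  -- the random variables indexed by the sum type
  set W : Fin p → (Fin m ⊕ ((i : Fin m) × Fin (n i))) → Ω → ℝ :=
    fun κ a ω => Sum.elim b (fun x => ε x.1 x.2) a ω κ with hWdef
  have hL2W : ∀ κ a, MemLp (W κ a) 2 μ := by
    rintro κ (i | x)
    · exact hb_L2 i κ
    · exact he_L2 x.1 x.2 κ
  have hmeanW : ∀ κ a, ∫ ω, W κ a ω ∂μ = 0 := by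
    rintro κ (i | x)
    · exact hb_mean i κ
    · exact he_mean x.1 x.2 κ
  set v : (Fin m ⊕ ((i : Fin m) × Fin (n i))) → ℝ :=
    Sum.elim (fun _ => Sb k l) (fun _ => Se k l) with hvdef
  have hdiag : ∀ a, ∫ ω, W k a ω * W l a ω ∂μ = v a := by
    rintro (i | x)
    · exact hb_cov i k l
    · exact he_cov x.1 x.2 k l
  have hint : ∀ a a', Integrable (fun ω => W k a ω * W l a' ω) μ :=
    fun a a' => aux_mul_int (hL2W k a) (hL2W l a')
  have hoff : ∀ a a', a ≠ a' → ∫ ω, W k a ω * W l a' ω ∂μ = 0 := by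
    intro a a' hne
    have hI : IndepFun (Sum.elim b (fun x => ε x.1 x.2) a)
        (Sum.elim b (fun x => ε x.1 x.2) a') μ := hindep.indepFun hne
    have h2 := ProbabilityTheory.IndepFun.comp hI (φ := fun f : Fin p → ℝ => f k) (ψ := fun f : Fin p → ℝ => f l)
      (measurable_pi_apply (X := fun _ : Fin p => ℝ) k) (measurable_pi_apply (X := fun _ : Fin p => ℝ) l)
    have h3 : ∫ ω, W k a ω * W l a' ω ∂μ
        = (∫ ω, W k a ω ∂μ) * ∫ ω, W l a' ω ∂μ :=
      h2.integral_fun_mul_eq_mul_integral ((hL2W k a).integrable one_le_two).aestronglyMeasurable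
        ((hL2W l a').integrable one_le_two).aestronglyMeasurable
    rw [h3, hmeanW, zero_mul]
  have hkey : ∀ c d : (Fin m ⊕ ((i : Fin m) × Fin (n i))) → ℝ,
      ∫ ω, (∑ a, c a * W k a ω) * (∑ a, d a * W l a ω) ∂μ = ∑ a, c a * d a * v a :=
    fun c d => aux_key (W k) (W l) v hint hdiag hoff c d
  have hMem : ∀ (κ : Fin p) (c : (Fin m ⊕ ((i : Fin m) × Fin (n i))) → ℝ),
      MemLp (fun ω => ∑ a, c a * W κ a ω) 2 μ :=
    fun κ c => memLp_finset_sum Finset.univ (fun a _ => (hL2W κ a).const_mul (c a))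
  -- decomposition of the means
  have hYbar' : ∀ i ω κ, Ybar i ω κ = b i ω κ + (n i:ℝ)⁻¹ * ∑ j, ε i j ω κ := by
    intro i ω κ
    rw [hYbar]
    simp only [hY]
    rw [Finset.sum_add_distrib, Finset.sum_const, Finset.card_univ, Fintype.card_fin,
      nsmul_eq_mul, mul_add, inv_mul_cancel_left₀ (hnine i)]
  have hYgrand' : ∀ ω κ, Ygrand ω κ
      = (∑ i, (n i:ℝ))⁻¹ * (∑ i', (n i':ℝ) * b i' ω κ)
        + (∑ i, (n i:ℝ))⁻¹ * ∑ i', ∑ j, ε i' j ω κ := by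
    intro ω κ
    rw [hYgrand]
    simp only [hY]
    rw [← mul_add, ← Finset.sum_add_distrib]
    congr 1
    refine Finset.sum_congr rfl fun i' _ => ?_
    rw [Finset.sum_add_distrib, Finset.sum_const, Finset.card_univ, Fintype.card_fin,
      nsmul_eq_mul]
  -- the coefficient functions
  set cc : Fin m → (Fin m ⊕ ((i : Fin m) × Fin (n i))) → ℝ := fun i =>
    Sum.elim (fun i' => (if i' = i then (1:ℝ) else 0) - (n i':ℝ) / (∑ i'', (n i'':ℝ)))
      (fun x => (if x.1 = i then ((n i:ℝ))⁻¹ else 0) - (∑ i'', (n i'':ℝ))⁻¹) with hccdef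
  set ee : (i : Fin m) → Fin (n i) → (Fin m ⊕ ((i : Fin m) × Fin (n i))) → ℝ := fun i j =>
    Sum.elim (fun _ => (0:ℝ))
      (fun x => (if x = ⟨i, j⟩ then (1:ℝ) else 0) - (if x.1 = i then ((n i:ℝ))⁻¹ else 0))
    with heedef
  -- linear representation of the centered variables
  have hccid : ∀ (i : Fin m) (κ : Fin p) (ω : Ω),
      Ybar i ω κ - Ygrand ω κ = ∑ a, cc i a * W κ a ω := by
    intro i κ ω
    rw [sum_elim_expand (fun a => cc i a * W κ a ω)]
    simp only [hccdef, hWdef, Sum.elim_inl, Sum.elim_inr]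
    have inner : ∀ i' : Fin m,
        ∑ j, ((if i' = i then ((n i:ℝ))⁻¹ else 0) - (∑ i'', (n i'':ℝ))⁻¹) * ε i' j ω κ
        = (if i' = i then ((n i:ℝ))⁻¹ else 0) * (∑ j, ε i' j ω κ)
          - (∑ i'', (n i'':ℝ))⁻¹ * ∑ j, ε i' j ω κ := by
      intro i'
      rw [← Finset.mul_sum, sub_mul]
    simp only [inner]
    rw [hYbar' i ω κ, hYgrand' ω κ]
    simp only [sub_mul, Finset.sum_sub_distrib, ite_mul, one_mul, zero_mul,
      Finset.sum_ite_eq', Finset.mem_univ, if_true]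
    rw [← Finset.mul_sum (a := (∑ i'', (n i'':ℝ))⁻¹)]
    have : ∑ i', (n i':ℝ) / (∑ i'', (n i'':ℝ)) * b i' ω κ
        = (∑ i'', (n i'':ℝ))⁻¹ * ∑ i', (n i':ℝ) * b i' ω κ := by
      rw [Finset.mul_sum]
      exact Finset.sum_congr rfl fun i' _ => by ring
    rw [this]
    ring
  have heeid : ∀ (i : Fin m) (j : Fin (n i)) (κ : Fin p) (ω : Ω),
      Y i j ω κ - Ybar i ω κ = ∑ a, ee i j a * W κ a ω := by
    intro i j κ ω
    rw [sum_elim_expand (fun a => ee i j a * W κ a ω)]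
    simp only [heedef, hWdef, Sum.elim_inl, Sum.elim_inr, zero_mul, Finset.sum_const_zero,
      zero_add]
    simp only [sub_mul, Finset.sum_sub_distrib, ite_mul, one_mul, zero_mul]
    have h1 : ∑ i', ∑ j', (if (⟨i', j'⟩ : (i : Fin m) × Fin (n i)) = ⟨i, j⟩
        then ε i' j' ω κ else 0) = ε i j ω κ := by
      rw [← Finset.sum_sigma (f := fun x : (i : Fin m) × Fin (n i) =>
        if x = ⟨i, j⟩ then ε x.1 x.2 ω κ else 0), Finset.univ_sigma_univ]
      simp
    have h2 : ∑ i', ∑ j' : Fin (n i'), (if i' = i then ((n i:ℝ))⁻¹ * ε i' j' ω κ else 0)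
        = (n i:ℝ)⁻¹ * ∑ j', ε i j' ω κ := by
      have h2a : ∀ i', ∑ j' : Fin (n i'), (if i' = i then ((n i:ℝ))⁻¹ * ε i' j' ω κ else 0)
          = if i' = i then ((n i:ℝ))⁻¹ * ∑ j' : Fin (n i'), ε i' j' ω κ else 0 := by
        intro i'
        split
        · rw [Finset.mul_sum]
        · simp
      simp only [h2a, Finset.sum_ite_eq', Finset.mem_univ, if_true]
    rw [h1, h2, hY, hYbar' i ω κ]
    ring
  -- coefficient sums
  have hccsum : ∀ i, ∑ a, cc i a * cc i a * v a
      = (1 - 2*(n i:ℝ)/(∑ i'', (n i'':ℝ)) + (∑ i'', (n i'':ℝ)^2)/(∑ i'', (n i'':ℝ))^2) * Sb k l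
        + ((n i:ℝ)⁻¹ - (∑ i'', (n i'':ℝ))⁻¹) * Se k l := by
    intro i
    rw [sum_elim_expand (fun a => cc i a * cc i a * v a)]
    simp only [hccdef, hvdef, Sum.elim_inl, Sum.elim_inr]
    have h1 : ∑ i', ((if i' = i then (1:ℝ) else 0) - (n i':ℝ)/(∑ i'', (n i'':ℝ)))
          * ((if i' = i then (1:ℝ) else 0) - (n i':ℝ)/(∑ i'', (n i'':ℝ))) * Sb k l
        = (1 - 2*(n i:ℝ)/(∑ i'', (n i'':ℝ)) + (∑ i'', (n i'':ℝ)^2)/(∑ i'', (n i'':ℝ))^2)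
          * Sb k l := by
      rw [← Finset.sum_mul]
      congr 1
      have h1a : ∀ i', ((if i' = i then (1:ℝ) else 0) - (n i':ℝ)/(∑ i'', (n i'':ℝ)))
            * ((if i' = i then (1:ℝ) else 0) - (n i':ℝ)/(∑ i'', (n i'':ℝ)))
          = (if i' = i then (1 - 2*(n i':ℝ)/(∑ i'', (n i'':ℝ))) else 0)
            + (n i':ℝ)^2/(∑ i'', (n i'':ℝ))^2 := by
        intro i'
        split
        · ring
        · ring
      simp only [h1a]
      rw [Finset.sum_add_distrib]
      simp only [Finset.sum_ite_eq', Finset.mem_univ, if_true]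
      rw [← Finset.sum_div]
    have h2 : ∑ i', ∑ _j' : Fin (n i'),
          (((if i' = i then ((n i:ℝ))⁻¹ else 0) - (∑ i'', (n i'':ℝ))⁻¹)
          * ((if i' = i then ((n i:ℝ))⁻¹ else 0) - (∑ i'', (n i'':ℝ))⁻¹) * Se k l)
        = ((n i:ℝ)⁻¹ - (∑ i'', (n i'':ℝ))⁻¹) * Se k l := by
      have hin : ∀ i' : Fin m, ∑ _j' : Fin (n i'),
            (((if i' = i then ((n i:ℝ))⁻¹ else 0) - (∑ i'', (n i'':ℝ))⁻¹)
            * ((if i' = i then ((n i:ℝ))⁻¹ else 0) - (∑ i'', (n i'':ℝ))⁻¹) * Se k l)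
          = ((if i' = i then ((n i:ℝ))⁻¹ - 2/(∑ i'', (n i'':ℝ)) else 0)
              + (n i':ℝ)/(∑ i'', (n i'':ℝ))^2) * Se k l := by
        intro i'
        rw [Finset.sum_const, Finset.card_univ, Fintype.card_fin, nsmul_eq_mul]
        by_cases h : i' = i
        · subst h
          rw [if_pos rfl, if_pos rfl]
          linear_combination Se k l * ((n i':ℝ)⁻¹ - 2*(∑ i'', (n i'':ℝ))⁻¹)
            * mul_inv_cancel₀ (hnine i')
        · rw [if_neg h, if_neg h]
          ring
      simp only [hin]
      rw [← Finset.sum_mul]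
      congr 1
      rw [Finset.sum_add_distrib]
      simp only [Finset.sum_ite_eq', Finset.mem_univ, if_true]
      rw [← Finset.sum_div]
      linear_combination (∑ i'', (n i'':ℝ))⁻¹ * mul_inv_cancel₀ hNne
    rw [h1, h2]
  have heesum : ∀ i (j : Fin (n i)), ∑ a, ee i j a * ee i j a * v a
      = (1 - (n i:ℝ)⁻¹) * Se k l := by
    intro i j
    rw [sum_elim_expand (fun a => ee i j a * ee i j a * v a)]
    simp only [heedef, hvdef, Sum.elim_inl, Sum.elim_inr, zero_mul, Finset.sum_const_zero,
      zero_add]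
    have hterm : ∀ (i' : Fin m) (j' : Fin (n i')),
        ((if (⟨i', j'⟩ : (i : Fin m) × Fin (n i)) = ⟨i, j⟩ then (1:ℝ) else 0)
          - (if i' = i then ((n i:ℝ))⁻¹ else 0))
        * ((if (⟨i', j'⟩ : (i : Fin m) × Fin (n i)) = ⟨i, j⟩ then (1:ℝ) else 0)
          - (if i' = i then ((n i:ℝ))⁻¹ else 0)) * Se k l
        = (if (⟨i', j'⟩ : (i : Fin m) × Fin (n i)) = ⟨i, j⟩
            then (1 - 2*(n i:ℝ)⁻¹) * Se k l else 0)
          + (if i' = i then ((n i:ℝ))⁻¹ * (n i:ℝ)⁻¹ * Se k l else 0) := by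
      intro i' j'
      by_cases h1 : (⟨i', j'⟩ : (i : Fin m) × Fin (n i)) = ⟨i, j⟩
      · have h2 : i' = i := congrArg Sigma.fst h1
        rw [if_pos h1, if_pos h2, if_pos h1, if_pos h2]
        ring
      · rw [if_neg h1, if_neg h1]
        by_cases h2 : i' = i
        · rw [if_pos h2, if_pos h2]
          ring
        · rw [if_neg h2, if_neg h2]
          ring
    simp only [hterm]
    simp only [Finset.sum_add_distrib]
    have hA : ∑ i', ∑ j' : Fin (n i'), (if (⟨i', j'⟩ : (i : Fin m) × Fin (n i)) = ⟨i, j⟩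
          then (1 - 2*(n i:ℝ)⁻¹) * Se k l else 0)
        = (1 - 2*(n i:ℝ)⁻¹) * Se k l := by
      rw [← Finset.sum_sigma (f := fun x : (i : Fin m) × Fin (n i) =>
        if x = ⟨i, j⟩ then (1 - 2*(n i:ℝ)⁻¹) * Se k l else 0), Finset.univ_sigma_univ]
      simp
    have hB : ∑ i', ∑ _j' : Fin (n i'),
          (if i' = i then ((n i:ℝ))⁻¹ * (n i:ℝ)⁻¹ * Se k l else 0)
        = (n i:ℝ)⁻¹ * Se k l := by
      have hBa : ∀ i', ∑ _j' : Fin (n i'),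
            (if i' = i then ((n i:ℝ))⁻¹ * (n i:ℝ)⁻¹ * Se k l else 0)
          = if i' = i then (n i':ℝ) * ((n i:ℝ)⁻¹ * (n i:ℝ)⁻¹ * Se k l) else 0 := by
        intro i'
        rw [Finset.sum_const, Finset.card_univ, Fintype.card_fin, nsmul_eq_mul]
        split
        · rfl
        · rw [mul_zero]
      simp only [hBa, Finset.sum_ite_eq', Finset.mem_univ, if_true]
      linear_combination ((n i:ℝ))⁻¹ * Se k l * mul_inv_cancel₀ (hnine i)
    rw [hA, hB]
    ring
  -- expectations of the products
  have hPker : ∀ i : Fin m, ∫ ω, (Ybar i ω k - Ygrand ω k) * (Ybar i ω l - Ygrand ω l) ∂μ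
      = (1 - 2*(n i:ℝ)/(∑ i'', (n i'':ℝ)) + (∑ i'', (n i'':ℝ)^2)/(∑ i'', (n i'':ℝ))^2) * Sb k l
        + ((n i:ℝ)⁻¹ - (∑ i'', (n i'':ℝ))⁻¹) * Se k l := by
    intro i
    calc ∫ ω, (Ybar i ω k - Ygrand ω k) * (Ybar i ω l - Ygrand ω l) ∂μ
        = ∫ ω, (∑ a, cc i a * W k a ω) * (∑ a, cc i a * W l a ω) ∂μ := by
          simp only [hccid]
      _ = ∑ a, cc i a * cc i a * v a := hkey _ _
      _ = _ := hccsum i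
  have hQker : ∀ i (j : Fin (n i)),
      ∫ ω, (Y i j ω k - Ybar i ω k) * (Y i j ω l - Ybar i ω l) ∂μ
      = (1 - (n i:ℝ)⁻¹) * Se k l := by
    intro i j
    calc ∫ ω, (Y i j ω k - Ybar i ω k) * (Y i j ω l - Ybar i ω l) ∂μ
        = ∫ ω, (∑ a, ee i j a * W k a ω) * (∑ a, ee i j a * W l a ω) ∂μ := by
          simp only [heeid]
      _ = ∑ a, ee i j a * ee i j a * v a := hkey _ _
      _ = _ := heesum i j
  -- integrability
  have hPint : ∀ i : Fin m,
      Integrable (fun ω => (Ybar i ω k - Ygrand ω k) * (Ybar i ω l - Ygrand ω l)) μ := by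
    intro i
    have h := aux_mul_int (hMem k (cc i)) (hMem l (cc i))
    simp only [← hccid] at h
    exact h
  have hQint : ∀ i (j : Fin (n i)),
      Integrable (fun ω => (Y i j ω k - Ybar i ω k) * (Y i j ω l - Ybar i ω l)) μ := by
    intro i j
    have h := aux_mul_int (hMem k (ee i j)) (hMem l (ee i j))
    simp only [← heeid] at h
    exact h
  -- compute the integral
  simp only [hSehat]
  rw [integral_const_mul]
  rw [integral_sub (integrable_finset_sum _ fun i _ => ((hPint i).const_mul _))
    ((integrable_finset_sum _ fun i _ =>
      integrable_finset_sum _ fun j _ => hQint i j).const_mul _)]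
  rw [integral_finset_sum _ (fun i _ => (hPint i).const_mul _)]
  rw [integral_const_mul]
  rw [integral_finset_sum _ (fun i _ => integrable_finset_sum _ fun j _ => hQint i j)]
  simp only [integral_const_mul, hPker]
  have h2nd : ∀ i : Fin m,
      ∫ ω, ∑ j, (Y i j ω k - Ybar i ω k) * (Y i j ω l - Ybar i ω l) ∂μ
      = ∑ _j : Fin (n i), (1 - (n i:ℝ)⁻¹) * Se k l := by
    intro i
    rw [integral_finset_sum _ (fun j _ => hQint i j)]
    exact Finset.sum_congr rfl fun j _ => hQker i j
  simp only [h2nd]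
  -- now a purely numerical identity
  have hE2 : (∑ i, ∑ _j : Fin (n i), ((1 - (n i:ℝ)⁻¹) * Se k l))
      = ((∑ i'', (n i'':ℝ)) - (m:ℝ)) * Se k l := by
    have hE2a : ∀ i, ∑ _j : Fin (n i), ((1 - (n i:ℝ)⁻¹) * Se k l)
        = ((n i:ℝ) - 1) * Se k l := by
      intro i
      rw [Finset.sum_const, Finset.card_univ, Fintype.card_fin, nsmul_eq_mul]
      linear_combination (-(Se k l)) * mul_inv_cancel₀ (hnine i)
    simp only [hE2a]
    rw [← Finset.sum_mul]
    congr 1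
    rw [Finset.sum_sub_distrib, Finset.sum_const, Finset.card_univ, Fintype.card_fin,
      nsmul_eq_mul, mul_one]
  have hE1 : ∑ i, (n i:ℝ)/((m:ℝ)-1)
        * ((1 - 2*(n i:ℝ)/(∑ i'', (n i'':ℝ))
            + (∑ i'', (n i'':ℝ)^2)/(∑ i'', (n i'':ℝ))^2) * Sb k l
          + ((n i:ℝ)⁻¹ - (∑ i'', (n i'':ℝ))⁻¹) * Se k l)
      = n0 * Sb k l + Se k l := by
    have hterm : ∀ i, (n i:ℝ)/((m:ℝ)-1)
          * ((1 - 2*(n i:ℝ)/(∑ i'', (n i'':ℝ))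
              + (∑ i'', (n i'':ℝ)^2)/(∑ i'', (n i'':ℝ))^2) * Sb k l
            + ((n i:ℝ)⁻¹ - (∑ i'', (n i'':ℝ))⁻¹) * Se k l)
        = ((m:ℝ)-1)⁻¹ * ((Sb k l + (∑ i'', (n i'':ℝ)^2)/(∑ i'', (n i'':ℝ))^2 * Sb k l
              - (∑ i'', (n i'':ℝ))⁻¹ * Se k l) * (n i:ℝ)
            + (-(2/(∑ i'', (n i'':ℝ))) * Sb k l) * (n i:ℝ)^2 + Se k l) := by
      intro i
      linear_combination ((m:ℝ)-1)⁻¹ * Se k l * mul_inv_cancel₀ (hnine i)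
    rw [Finset.sum_congr rfl fun i _ => hterm i]
    rw [← Finset.mul_sum]
    simp only [Finset.sum_add_distrib]
    rw [← Finset.mul_sum, ← Finset.mul_sum, Finset.sum_const, Finset.card_univ,
      Fintype.card_fin, nsmul_eq_mul]
    rw [hn0]
    linear_combination (((m:ℝ)-1)⁻¹ * (∑ i'', (n i'':ℝ)^2) * (∑ i'', (n i'':ℝ))⁻¹ * Sb k l
        - ((m:ℝ)-1)⁻¹ * Se k l) * mul_inv_cancel₀ hNne
      + Se k l * mul_inv_cancel₀ hm1
  rw [hE1, hE2, inv_mul_cancel_left₀ hNmne, add_sub_cancel_right,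
    inv_mul_cancel_left₀ hn0ne]
end

section
/- Let Σ⁰ be a symmetric p×p matrix with at most p·s nonzero entries, let B be a symmetric matrix with max_{k,ℓ} |(B - Σ⁰)_{k,ℓ}| ≤ λ, and suppose Σ⁰ ⪰ δ I_p. Define F(Δ) = (1/2)‖Δ + Σ⁰ - B‖_F² + λ|Δ + Σ⁰|_1 - [(1/2)‖Σ⁰ - B‖_F² + λ|Σ⁰|_1]. Then for every symmetric Δ with ‖Δ‖_F = 5λ(ps)^{1/2}, F(Δ) ≥ (5/2)λ² p s > 0. -/
open Finset

/-- Deterministic lower bound on the centered objective on the sphere of radius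
5 λ sqrt(ps): F(Δ) ≥ (5/2) λ² p s > 0. -/
theorem objective_positive_on_sphere
    (p s : ℕ) (hp : 0 < p) (hs : 0 < s)
    (lam δ : ℝ) (hlam : 0 < lam) (hδ : 0 < δ)
    (S0 B : Matrix (Fin p) (Fin p) ℝ) (hS0 : S0.IsSymm) (hB : B.IsSymm)
    (hsparse : ∃ S : Finset (Fin p × Fin p), S.card ≤ p * s ∧
      ∀ k l, S0 k l ≠ 0 → (k, l) ∈ S)
    (hmax : ∀ k l, |B k l - S0 k l| ≤ lam)
    (hpsd : (S0 - δ • (1 : Matrix (Fin p) (Fin p) ℝ)).PosSemidef)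
    (F : Matrix (Fin p) (Fin p) ℝ → ℝ)
    (hF : ∀ Δ, F Δ =
      (1 / 2) * (∑ k, ∑ l, (Δ k l + S0 k l - B k l) ^ 2)
        + lam * (∑ k, ∑ l, if k ≠ l then |Δ k l + S0 k l| else 0)
        - ((1 / 2) * (∑ k, ∑ l, (S0 k l - B k l) ^ 2)
            + lam * (∑ k, ∑ l, if k ≠ l then |S0 k l| else 0))) :
    ∀ Δ : Matrix (Fin p) (Fin p) ℝ, Δ.IsSymm →
      Real.sqrt (∑ k, ∑ l, (Δ k l) ^ 2) = 5 * lam * Real.sqrt ((p : ℝ) * (s : ℝ)) →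
      ((5 / 2) * lam ^ 2 * ((p : ℝ) * (s : ℝ)) ≤ F Δ ∧
        0 < (5 / 2) * lam ^ 2 * ((p : ℝ) * (s : ℝ))) := by
  obtain ⟨S, hScard, hSsupp⟩ := hsparse
  intro Δ hΔ hnorm
  have hps : (0:ℝ) ≤ (p:ℝ) * s := by positivity
  obtain ⟨N, hNdef⟩ : ∃ N : ℝ, N = ∑ k, ∑ l, (Δ k l)^2 := ⟨_, rfl⟩
  rw [← hNdef] at hnorm
  have hN0 : (0:ℝ) ≤ N := by rw [hNdef]; positivity
  have hN : N = 25 * lam^2 * ((p:ℝ)*s) := by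
    have h1 : N = (Real.sqrt N)^2 := (Real.sq_sqrt hN0).symm
    rw [h1, hnorm, mul_pow, mul_pow, Real.sq_sqrt hps]; ring
  -- diagonal entries of S0 are at least δ
  have hdiag : ∀ k, δ ≤ S0 k k := by
    intro k
    have h := hpsd.dotProduct_mulVec_nonneg (Pi.single k 1)
    simp [Matrix.mulVec, dotProduct, Pi.single_apply, Finset.sum_ite_eq,
      Matrix.sub_apply, Matrix.smul_apply, Matrix.one_apply] at h
    linarith
  -- rewrite F Δ as a single double sum
  have hFeq : F Δ = ∑ k, ∑ l,
      ((1/2) * (Δ k l + S0 k l - B k l)^2 + lam * (if k ≠ l then |Δ k l + S0 k l| else 0)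
        - ((1/2) * (S0 k l - B k l)^2 + lam * (if k ≠ l then |S0 k l| else 0))) := by
    rw [hF]
    simp only [Finset.sum_sub_distrib, Finset.sum_add_distrib, Finset.mul_sum]
  -- per-entry lower bound
  have hentry : ∀ k l,
      (1/2) * (Δ k l)^2 + (if (k, l) ∈ S then -(2 * lam * |Δ k l|) else 0) ≤
      (1/2) * (Δ k l + S0 k l - B k l)^2 + lam * (if k ≠ l then |Δ k l + S0 k l| else 0)
        - ((1/2) * (S0 k l - B k l)^2 + lam * (if k ≠ l then |S0 k l| else 0)) := by
    intro k l
    have hBS : |S0 k l - B k l| ≤ lam := by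
      have := hmax k l; rw [abs_sub_comm] at this; exact this
    have hcross : -(lam * |Δ k l|) ≤ Δ k l * (S0 k l - B k l) := by
      have h1 : |Δ k l * (S0 k l - B k l)| ≤ |Δ k l| * lam := by
        rw [abs_mul]; exact mul_le_mul_of_nonneg_left hBS (abs_nonneg _)
      have := neg_abs_le (Δ k l * (S0 k l - B k l))
      nlinarith
    by_cases hmem : (k, l) ∈ S
    · rw [if_pos hmem]
      by_cases hkl : k ≠ l
      · rw [if_pos hkl, if_pos hkl]
        have habs : |S0 k l| - |Δ k l + S0 k l| ≤ |Δ k l| := by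
          have := abs_sub_abs_le_abs_sub (S0 k l) (Δ k l + S0 k l)
          have h2 : |S0 k l - (Δ k l + S0 k l)| = |Δ k l| := by
            rw [show S0 k l - (Δ k l + S0 k l) = -(Δ k l) by ring, abs_neg]
          linarith
        nlinarith [abs_nonneg (Δ k l)]
      · rw [if_neg hkl, if_neg hkl]
        nlinarith [abs_nonneg (Δ k l)]
    · have hS0z : S0 k l = 0 := by
        by_contra h
        exact hmem (hSsupp k l h)
      have hkl : k ≠ l := by
        intro h
        subst h
        have := hdiag k
        rw [hS0z] at this
        linarith
      rw [if_neg hmem, if_pos hkl, if_pos hkl, hS0z]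
      simp only [add_zero, abs_zero, mul_zero, zero_sub, sub_zero]
      have hBl : |B k l| ≤ lam := by
        have := hmax k l; rw [hS0z, sub_zero] at this; exact this
      have h1 : Δ k l * B k l ≤ lam * |Δ k l| := by
        calc Δ k l * B k l ≤ |Δ k l * B k l| := le_abs_self _
          _ = |Δ k l| * |B k l| := abs_mul _ _
          _ ≤ |Δ k l| * lam := mul_le_mul_of_nonneg_left hBl (abs_nonneg _)
          _ = lam * |Δ k l| := mul_comm _ _
      nlinarith [abs_nonneg (Δ k l)]
  -- sum the entrywise bounds
  have hsum : (1/2) * N + ∑ k, ∑ l, (if (k, l) ∈ S then -(2 * lam * |Δ k l|) else 0)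
      ≤ F Δ := by
    rw [hFeq, hNdef]
    rw [Finset.mul_sum]
    simp only [Finset.mul_sum]
    rw [← Finset.sum_add_distrib]
    refine Finset.sum_le_sum fun k _ => ?_
    rw [← Finset.sum_add_distrib]
    exact Finset.sum_le_sum fun l _ => hentry k l
  -- rewrite the indicator double sum as a sum over S
  have hSsum : ∑ k, ∑ l, (if (k, l) ∈ S then -(2 * lam * |Δ k l|) else 0)
      = -(2 * lam * ∑ x ∈ S, |Δ x.1 x.2|) := by
    rw [← Finset.sum_product', Finset.univ_product_univ, Finset.sum_ite_mem,
      Finset.univ_inter, Finset.mul_sum, ← Finset.sum_neg_distrib]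
  -- Cauchy–Schwarz bound on ∑_S |Δ|
  have hCS : ∑ x ∈ S, |Δ x.1 x.2| ≤ 5 * lam * ((p:ℝ) * s) := by
    have h1 : (∑ x ∈ S, 1 * |Δ x.1 x.2|)^2 ≤ (∑ x ∈ S, (1:ℝ)^2) * ∑ x ∈ S, |Δ x.1 x.2|^2 :=
      Finset.sum_mul_sq_le_sq_mul_sq S _ _
    have h2 : (∑ x ∈ S, (1:ℝ)^2) = (S.card : ℝ) := by simp
    have h3 : ∑ x ∈ S, |Δ x.1 x.2|^2 ≤ N := by
      have hsub : S ⊆ Finset.univ ×ˢ Finset.univ := fun x _ => by simp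
      have h4 : ∑ x ∈ S, |Δ x.1 x.2|^2 ≤ ∑ x ∈ Finset.univ ×ˢ Finset.univ, |Δ x.1 x.2|^2 :=
        Finset.sum_le_sum_of_subset_of_nonneg hsub (fun x _ _ => by positivity)
      have h5 : ∑ x ∈ Finset.univ ×ˢ Finset.univ, |Δ x.1 x.2|^2 = N := by
        rw [hNdef, ← Finset.sum_product']
        exact Finset.sum_congr rfl fun x _ => sq_abs _
      linarith
    have hcard : (S.card : ℝ) ≤ (p:ℝ) * s := by
      calc (S.card : ℝ) ≤ ((p * s : ℕ) : ℝ) := by exact_mod_cast hScard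
        _ = (p:ℝ) * s := by push_cast; ring
    have hQ0 : (0:ℝ) ≤ ∑ x ∈ S, |Δ x.1 x.2|^2 :=
      Finset.sum_nonneg fun x _ => by positivity
    have h5 : (∑ x ∈ S, 1 * |Δ x.1 x.2|) = ∑ x ∈ S, |Δ x.1 x.2| := by simp
    rw [h5, h2] at h1
    have hpos : (0:ℝ) ≤ ∑ x ∈ S, |Δ x.1 x.2| :=
      Finset.sum_nonneg fun x _ => abs_nonneg _
    have hb : (0:ℝ) ≤ 5 * lam * ((p:ℝ) * s) := by positivity
    have h6 : (∑ x ∈ S, |Δ x.1 x.2|)^2 ≤ (5 * lam * ((p:ℝ) * s))^2 := by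
      calc (∑ x ∈ S, |Δ x.1 x.2|)^2 ≤ (S.card : ℝ) * ∑ x ∈ S, |Δ x.1 x.2|^2 := h1
        _ ≤ ((p:ℝ)*s) * N := mul_le_mul hcard h3 hQ0 hps
        _ = (5 * lam * ((p:ℝ) * s))^2 := by rw [hN]; ring
    calc ∑ x ∈ S, |Δ x.1 x.2| = Real.sqrt ((∑ x ∈ S, |Δ x.1 x.2|)^2) :=
          (Real.sqrt_sq hpos).symm
      _ ≤ Real.sqrt ((5 * lam * ((p:ℝ) * s))^2) := Real.sqrt_le_sqrt h6
      _ = 5 * lam * ((p:ℝ) * s) := Real.sqrt_sq hb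
  constructor
  · rw [hSsum] at hsum
    have h7 : -(2 * lam * ∑ x ∈ S, |Δ x.1 x.2|) ≥ -(2 * lam * (5 * lam * ((p:ℝ) * s))) := by
      have := mul_le_mul_of_nonneg_left hCS (by linarith : (0:ℝ) ≤ 2 * lam)
      linarith
    rw [hN] at hsum
    linarith
  · have hp' : (0:ℝ) < p := by exact_mod_cast hp
    have hs' : (0:ℝ) < s := by exact_mod_cast hs
    positivity
end

section
/- Let F : 𝒦 → ℝ be a convex function on a convex set 𝒦 of symmetric matrices containing 0, with F(0) = 0, and suppose F(Δ) > 0 for all Δ ∈ 𝒦 with ‖Δ‖_F = r. Then any minimizer Δ̂ of F over 𝒦 satisfies ‖Δ̂‖_F < r. -/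
open Finset

/-- If a convex function on a convex set of symmetric matrices containing 0 satisfies
F(0) = 0 and F > 0 on the sphere of radius r, then any minimizer lies strictly inside. -/
theorem minimizer_inside_sphere
    (p : ℕ) (r : ℝ) (hr : 0 < r)
    (K : Set (Matrix (Fin p) (Fin p) ℝ)) (hKsymm : ∀ A ∈ K, A.IsSymm)
    (hK : Convex ℝ K) (h0 : (0 : Matrix (Fin p) (Fin p) ℝ) ∈ K)
    (F : Matrix (Fin p) (Fin p) ℝ → ℝ) (hF : ConvexOn ℝ K F) (hF0 : F 0 = 0)
    (hpos : ∀ Δ ∈ K, Real.sqrt (∑ k, ∑ l, (Δ k l) ^ 2) = r → 0 < F Δ)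
    (Dhat : Matrix (Fin p) (Fin p) ℝ) (hDK : Dhat ∈ K)
    (hmin : ∀ Δ ∈ K, F Dhat ≤ F Δ) :
    Real.sqrt (∑ k, ∑ l, (Dhat k l) ^ 2) < r := by
  by_contra hcon
  push_neg at hcon
  set n := Real.sqrt (∑ k, ∑ l, (Dhat k l) ^ 2) with hn
  have hn0 : 0 < n := lt_of_lt_of_le hr hcon
  set t : ℝ := r / n with ht
  have ht0 : 0 < t := div_pos hr hn0
  have ht1 : t ≤ 1 := by
    rw [ht, div_le_one hn0]; exact hcon
  have hmem : t • Dhat ∈ K := by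
    have := hK h0 hDK (by linarith : (0:ℝ) ≤ 1 - t) (le_of_lt ht0) (by ring)
    simpa using this
  have hnorm : Real.sqrt (∑ k, ∑ l, ((t • Dhat) k l) ^ 2) = r := by
    have : (∑ k, ∑ l, ((t • Dhat) k l) ^ 2) = t ^ 2 * ∑ k, ∑ l, (Dhat k l) ^ 2 := by
      simp [Matrix.smul_apply, mul_pow, Finset.mul_sum]
    rw [this, Real.sqrt_mul (sq_nonneg t), Real.sqrt_sq (le_of_lt ht0), ← hn,
      ht, div_mul_cancel₀ _ (ne_of_gt hn0)]
  have hFpos := hpos _ hmem hnorm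
  have hconv := hF.2 h0 hDK (by linarith : (0:ℝ) ≤ 1 - t) (le_of_lt ht0) (by ring)
  have hFD : F Dhat ≤ 0 := by simpa [hF0] using hmin 0 h0
  have : F (t • Dhat) ≤ 0 := by
    have h1 : (1 - t) • (0 : Matrix (Fin p) (Fin p) ℝ) + t • Dhat = t • Dhat := by simp
    rw [h1, hF0] at hconv
    simp only [smul_eq_mul, mul_zero, zero_add] at hconv
    nlinarith
  linarith
end

section
/- Let B, Σ⁰ be symmetric p×p matrices with Σ⁰ ⪰ δ I_p, Σ⁰ having at most ps nonzero entries, and max_{k,ℓ}|(B - Σ⁰)_{kℓ}| ≤ λ. Then any minimizer Σ̂ of (1/2)‖Σ - B‖_F² + λ|Σ|_1 over {Σ symmetric : Σ ⪰ δ I_p} satisfies ‖Σ̂ - Σ⁰‖_F ≤ 5λ(ps)^{1/2}. -/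
open Finset

/-- Deterministic version of the estimation error bound: any minimizer of the penalized
objective over the positive definite cone is within 5 λ sqrt(ps) of the truth in
Frobenius norm. -/
theorem penalized_minimizer_error_bound
    (p s : ℕ) (lam δ : ℝ) (hlam : 0 < lam) (hδ : 0 < δ)
    (B S0 : Matrix (Fin p) (Fin p) ℝ) (hB : B.IsSymm) (hS0 : S0.IsSymm)
    (hpsd : (S0 - δ • (1 : Matrix (Fin p) (Fin p) ℝ)).PosSemidef)
    (hsparse : ∃ S : Finset (Fin p × Fin p), S.card ≤ p * s ∧
      ∀ k l, S0 k l ≠ 0 → (k, l) ∈ S)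
    (hmax : ∀ k l, |B k l - S0 k l| ≤ lam)
    (Shat : Matrix (Fin p) (Fin p) ℝ) (hhatsymm : Shat.IsSymm)
    (hhatpsd : (Shat - δ • (1 : Matrix (Fin p) (Fin p) ℝ)).PosSemidef)
    (hmin : ∀ S' : Matrix (Fin p) (Fin p) ℝ, S'.IsSymm →
      (S' - δ • (1 : Matrix (Fin p) (Fin p) ℝ)).PosSemidef →
      (1 / 2) * (∑ k, ∑ l, (Shat k l - B k l) ^ 2)
          + lam * (∑ k, ∑ l, if k ≠ l then |Shat k l| else 0)
        ≤ (1 / 2) * (∑ k, ∑ l, (S' k l - B k l) ^ 2)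
          + lam * (∑ k, ∑ l, if k ≠ l then |S' k l| else 0)) :
    Real.sqrt (∑ k, ∑ l, (Shat k l - S0 k l) ^ 2)
      ≤ 5 * lam * Real.sqrt ((p : ℝ) * (s : ℝ)) := by
  obtain ⟨S, hScard, hSsupp⟩ := hsparse
  -- diagonal entries of S0 are at least δ, hence nonzero, hence on the support
  have hdiag : ∀ k : Fin p, (k, k) ∈ S := by
    intro k
    apply hSsupp
    have h1 : 0 ≤ (S0 - δ • (1 : Matrix (Fin p) (Fin p) ℝ)) k k := by
      have := hpsd.dotProduct_mulVec_nonneg (Pi.single k 1)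
      simpa [Matrix.mulVec, dotProduct, Pi.single_apply] using this
    have h2 : (S0 - δ • (1 : Matrix (Fin p) (Fin p) ℝ)) k k = S0 k k - δ := by
      simp [Matrix.sub_apply, Matrix.smul_apply, Matrix.one_apply]
    have : δ ≤ S0 k k := by rw [h2] at h1; linarith
    exact (hδ.trans_le this).ne'
  set A : ℝ := ∑ k, ∑ l, (Shat k l - S0 k l) ^ 2 with hAdef
  have hA0 : 0 ≤ A :=
    Finset.sum_nonneg fun k _ => Finset.sum_nonneg fun l _ => sq_nonneg _
  set I : ℝ := ∑ k, ∑ l, (Shat k l - S0 k l) * (B k l - S0 k l) with hIdef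
  set P0 : ℝ := ∑ k, ∑ l, if k ≠ l then |S0 k l| else 0 with hP0
  set Ph : ℝ := ∑ k, ∑ l, if k ≠ l then |Shat k l| else 0 with hPh
  set C : ℝ := ∑ k, ∑ l, (S0 k l - B k l) ^ 2 with hC
  have hkey := hmin S0 hS0 hpsd
  have hexp : ∑ k, ∑ l, (Shat k l - B k l) ^ 2 = A - 2 * I + C := by
    rw [hAdef, hIdef, hC]
    rw [Finset.mul_sum, ← Finset.sum_sub_distrib, ← Finset.sum_add_distrib]
    refine Finset.sum_congr rfl fun k _ => ?_
    rw [Finset.mul_sum, ← Finset.sum_sub_distrib, ← Finset.sum_add_distrib]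
    refine Finset.sum_congr rfl fun l _ => ?_
    ring
  have hmain : (1 / 2) * A ≤ I + lam * (P0 - Ph) := by
    rw [hexp] at hkey; linarith
  -- pass to a sum over pairs
  set g : Fin p × Fin p → ℝ := fun q =>
    (Shat q.1 q.2 - S0 q.1 q.2) * (B q.1 q.2 - S0 q.1 q.2)
      + lam * (if q.1 ≠ q.2 then |S0 q.1 q.2| else 0)
      - lam * (if q.1 ≠ q.2 then |Shat q.1 q.2| else 0) with hg
  have hqsum : I + lam * (P0 - Ph) = ∑ q : Fin p × Fin p, g q := by
    rw [hg, Fintype.sum_prod_type]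
    simp only [Finset.sum_add_distrib, Finset.sum_sub_distrib, ← Finset.mul_sum]
    rw [hIdef, hP0, hPh]
    ring
  have habs : ∀ k l : Fin p,
      (Shat k l - S0 k l) * (B k l - S0 k l) ≤ lam * |Shat k l - S0 k l| := by
    intro k l
    calc (Shat k l - S0 k l) * (B k l - S0 k l)
        ≤ |(Shat k l - S0 k l) * (B k l - S0 k l)| := le_abs_self _
      _ = |Shat k l - S0 k l| * |B k l - S0 k l| := abs_mul _ _
      _ ≤ |Shat k l - S0 k l| * lam :=
          mul_le_mul_of_nonneg_left (hmax k l) (abs_nonneg _)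
      _ = lam * |Shat k l - S0 k l| := mul_comm _ _
  have hcompl : ∑ q ∈ Sᶜ, g q ≤ 0 := by
    apply Finset.sum_nonpos
    rintro ⟨k, l⟩ hq
    rw [Finset.mem_compl] at hq
    have hz : S0 k l = 0 := by
      by_contra h; exact hq (hSsupp k l h)
    have hne : k ≠ l := by
      rintro rfl; exact hq (hdiag k)
    have h1 := habs k l
    rw [hg]
    simp only [hz, if_pos hne, sub_zero, abs_zero] at h1 ⊢
    linarith
  have honS : ∀ q ∈ S, g q ≤ 2 * lam * |Shat q.1 q.2 - S0 q.1 q.2| := by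
    rintro ⟨k, l⟩ _
    rw [hg]
    have h1 := habs k l
    by_cases hkl : k ≠ l
    · simp only [if_pos hkl]
      have h2 : |S0 k l| - |Shat k l| ≤ |S0 k l - Shat k l| := abs_sub_abs_le_abs_sub _ _
      have h3 : |S0 k l - Shat k l| = |Shat k l - S0 k l| := abs_sub_comm _ _
      nlinarith [hlam.le]
    · simp only [if_neg hkl, mul_zero, sub_zero, add_zero]
      have : 0 ≤ lam * |Shat k l - S0 k l| := mul_nonneg hlam.le (abs_nonneg _)
      linarith
  have hsum2 : ∑ q : Fin p × Fin p, g q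
      ≤ 2 * lam * ∑ q ∈ S, |Shat q.1 q.2 - S0 q.1 q.2| := by
    rw [← Finset.sum_add_sum_compl S g, Finset.mul_sum]
    have := Finset.sum_le_sum honS
    linarith
  -- Cauchy–Schwarz
  have hAprod : A = ∑ q : Fin p × Fin p, (Shat q.1 q.2 - S0 q.1 q.2) ^ 2 := by
    rw [hAdef, Fintype.sum_prod_type]
  have hsubA : ∑ q ∈ S, (Shat q.1 q.2 - S0 q.1 q.2) ^ 2 ≤ A := by
    rw [hAprod]
    exact Finset.sum_le_sum_of_subset_of_nonneg (Finset.subset_univ S)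
      (fun q _ _ => sq_nonneg _)
  have hCS : (∑ q ∈ S, |Shat q.1 q.2 - S0 q.1 q.2|) ^ 2
      ≤ ((p : ℝ) * s) * A := by
    have h1 := sq_sum_le_card_mul_sum_sq (s := S)
      (f := fun q => |Shat q.1 q.2 - S0 q.1 q.2|)
    have h2 : ∑ q ∈ S, |Shat q.1 q.2 - S0 q.1 q.2| ^ 2
        = ∑ q ∈ S, (Shat q.1 q.2 - S0 q.1 q.2) ^ 2 :=
      Finset.sum_congr rfl fun q _ => sq_abs _
    have h3 : (S.card : ℝ) ≤ (p : ℝ) * s := by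
      have := hScard
      calc (S.card : ℝ) ≤ ((p * s : ℕ) : ℝ) := by exact_mod_cast this
        _ = (p : ℝ) * s := by push_cast; ring
    calc (∑ q ∈ S, |Shat q.1 q.2 - S0 q.1 q.2|) ^ 2
        ≤ (S.card : ℝ) * ∑ q ∈ S, |Shat q.1 q.2 - S0 q.1 q.2| ^ 2 := h1
      _ ≤ ((p : ℝ) * s) * A := by
          rw [h2]
          have hnn : 0 ≤ ∑ q ∈ S, (Shat q.1 q.2 - S0 q.1 q.2) ^ 2 :=
            Finset.sum_nonneg fun q _ => sq_nonneg _
          nlinarith [hsubA, Nat.cast_nonneg (α := ℝ) S.card]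
  have hsumle : ∑ q ∈ S, |Shat q.1 q.2 - S0 q.1 q.2|
      ≤ Real.sqrt ((p : ℝ) * s) * Real.sqrt A := by
    rw [← Real.sqrt_mul (by positivity) A]
    exact Real.le_sqrt_of_sq_le hCS
  -- combine everything
  have hfinal : (1 / 2) * A ≤ 2 * lam * (Real.sqrt ((p : ℝ) * s) * Real.sqrt A) := by
    calc (1 / 2) * A ≤ I + lam * (P0 - Ph) := hmain
      _ = ∑ q : Fin p × Fin p, g q := hqsum
      _ ≤ 2 * lam * ∑ q ∈ S, |Shat q.1 q.2 - S0 q.1 q.2| := hsum2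
      _ ≤ 2 * lam * (Real.sqrt ((p : ℝ) * s) * Real.sqrt A) := by
          apply mul_le_mul_of_nonneg_left hsumle (by positivity)
  have ht0 : 0 ≤ Real.sqrt A := Real.sqrt_nonneg _
  have htsq : Real.sqrt A ^ 2 = A := Real.sq_sqrt hA0
  have hc0 : 0 ≤ Real.sqrt ((p : ℝ) * s) := Real.sqrt_nonneg _
  have hlc : 0 ≤ lam * Real.sqrt ((p : ℝ) * s) := mul_nonneg hlam.le hc0
  rcases eq_or_lt_of_le ht0 with h | h
  · rw [← h]; positivity
  · have hA' : Real.sqrt A * Real.sqrt A = A := Real.mul_self_sqrt hA0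
    have h4 : Real.sqrt A * Real.sqrt A
        ≤ (4 * (lam * Real.sqrt ((p : ℝ) * s))) * Real.sqrt A := by
      rw [hA']
      have hr : (4 * (lam * Real.sqrt ((p : ℝ) * s))) * Real.sqrt A
          = 2 * (2 * lam * (Real.sqrt ((p : ℝ) * s) * Real.sqrt A)) := by ring
      rw [hr]; linarith [hfinal]
    have h5 : Real.sqrt A ≤ 4 * (lam * Real.sqrt ((p : ℝ) * s)) :=
      le_of_mul_le_mul_right h4 h
    have h6 : 4 * (lam * Real.sqrt ((p : ℝ) * s))
        ≤ 5 * lam * Real.sqrt ((p : ℝ) * s) := by linarith [hlc]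
    linarith
end
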